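/- Let 𝒯 be a pretriangulated category which is ℚ-linear and pseudo-abelian. Let A → B → C → A[1] be a distinguished triangle with an endomorphism φ = (φ_A, φ_B, φ_C) of the triangle, and assume A and C admit finite decompositions into generalized eigenspaces for φ_A and φ_C respectively (with rational eigenvalues). Then for every rational number α the induced triangle of generalized eigenspaces for the eigenvalue α, A^{(α)} → B^{(α)} → C^{(α)} → A^{(α)}[1], is distinguished; i.e., there are φ-equivariant direct sum decompositions of A, B, C indexed by the finitely many occurring eigenvalues, compatible with the three maps of the triangle, such that on the summand for eigenvalue α some power of (φ − α·id) vanishes, and each resulting triangle of summands is distinguished. -/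

import Mathlib

open CategoryTheory CategoryTheory.Limits CategoryTheory.Pretriangulated Polynomial

namespace Stmt4Aux

variable {C : Type*} [Category C]

lemma comm_pow {A B : C} (f : A ⟶ B) (x : End A) (y : End B)
    (h : f ≫ y = x ≫ f) (n : ℕ) : f ≫ (y ^ n : End B) = (x ^ n : End A) ≫ f := by
  induction n with
  | zero => simp [pow_zero, End.one_def]
  | succ n ih =>
    rw [pow_succ, pow_succ, End.mul_def, End.mul_def]
    show f ≫ (y ≫ y ^ n) = (x ≫ x ^ n) ≫ f
    rw [← Category.assoc, h, Category.assoc, ih, ← Category.assoc]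

variable [Preadditive C] [CategoryTheory.Linear ℚ C]

lemma comm_aeval {A B : C} (f : A ⟶ B) (x : End A) (y : End B)
    (h : f ≫ y = x ≫ f) (p : ℚ[X]) :
    f ≫ (aeval y p : End B) = (aeval x p : End A) ≫ f := by
  induction p using Polynomial.induction_on' with
  | add p q hp hq =>
    rw [map_add, map_add]
    show f ≫ ((aeval y p : End B) + aeval y q) = ((aeval x p : End A) + aeval x q) ≫ f
    rw [Preadditive.comp_add, Preadditive.add_comp, hp, hq]
  | monomial n a =>
    rw [aeval_monomial, aeval_monomial, Algebra.algebraMap_eq_smul_one,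
      Algebra.algebraMap_eq_smul_one, smul_mul_assoc, smul_mul_assoc, one_mul, one_mul]
    show f ≫ (a • (y ^ n : End B) : B ⟶ B) = (a • (x ^ n : End A) : A ⟶ A) ≫ f
    rw [CategoryTheory.Linear.comp_smul, CategoryTheory.Linear.smul_comp,
      comm_pow f x y h n]

variable {D : Type*} [Category D]

lemma map_pow (F : C ⥤ D) {A : C} (x : End A) (y : End (F.obj A))
    (hy : F.map (x : A ⟶ A) = y) (n : ℕ) :
    F.map ((x ^ n : End A) : A ⟶ A) = ((y ^ n : End (F.obj A)) : F.obj A ⟶ F.obj A) := by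
  induction n with
  | zero =>
    show F.map ((1 : End A) : A ⟶ A) = ((1 : End (F.obj A)) : F.obj A ⟶ F.obj A)
    rw [End.one_def, End.one_def, F.map_id]
  | succ n ih =>
    rw [pow_succ, pow_succ, End.mul_def, End.mul_def]
    show F.map (x ≫ (x ^ n : End A)) = y ≫ _
    rw [F.map_comp, ih, hy]

lemma map_aeval [Preadditive D] [CategoryTheory.Linear ℚ D]
    (F : C ⥤ D) [F.Additive] [F.Linear ℚ] {A : C} (x : End A) (y : End (F.obj A))
    (hy : F.map (x : A ⟶ A) = y) (p : ℚ[X]) :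
    F.map ((aeval x p : End A) : A ⟶ A)
      = ((aeval y p : End (F.obj A)) : F.obj A ⟶ F.obj A) := by
  induction p using Polynomial.induction_on' with
  | add p q hp hq =>
    rw [map_add, map_add]
    show F.map ((aeval x p : End A) + aeval x q) = ((aeval y p : End (F.obj A)) + aeval y q)
    rw [F.map_add, hp, hq]
  | monomial n a =>
    rw [aeval_monomial, aeval_monomial, Algebra.algebraMap_eq_smul_one,
      Algebra.algebraMap_eq_smul_one, smul_mul_assoc, smul_mul_assoc, one_mul, one_mul]
    show F.map (a • ((x ^ n : End A) : A ⟶ A)) = (a • (y ^ n : End (F.obj A)) : F.obj A ⟶ F.obj A)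
    rw [F.map_smul, map_pow F x y hy n]

omit [Preadditive C] [CategoryTheory.Linear ℚ C] in
lemma conj_pow {A Y : C} (ι : Y ⟶ A) (π : A ⟶ Y) (ψ : End A) (E : End A) (χ : End Y)
    (hχ : (χ : Y ⟶ Y) = ι ≫ (ψ : A ⟶ A) ≫ π)
    (hιπ : ι ≫ π = 𝟙 Y) (hπι : π ≫ ι = (E : A ⟶ A))
    (hcomm : (ψ : A ⟶ A) ≫ E = (E : A ⟶ A) ≫ ψ) (hE : ι ≫ (E : A ⟶ A) = ι) (n : ℕ) :
    ((χ ^ n : End Y) : Y ⟶ Y) = ι ≫ ((ψ ^ n : End A) : A ⟶ A) ≫ π := by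
  induction n with
  | zero =>
    show ((1 : End Y) : Y ⟶ Y) = ι ≫ ((1 : End A) : A ⟶ A) ≫ π
    rw [End.one_def, End.one_def, Category.id_comp, hιπ]
  | succ n ih =>
    rw [pow_succ, pow_succ, End.mul_def, End.mul_def]
    show (χ : Y ⟶ Y) ≫ ((χ ^ n : End Y) : Y ⟶ Y)
      = ι ≫ ((ψ : A ⟶ A) ≫ ((ψ^n : End A) : A ⟶ A)) ≫ π
    rw [ih, hχ]
    calc (ι ≫ (ψ : A ⟶ A) ≫ π) ≫ ι ≫ ((ψ ^ n : End A) : A ⟶ A) ≫ π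
        = ι ≫ ψ ≫ (π ≫ ι) ≫ ((ψ ^ n : End A) : A ⟶ A) ≫ π := by
          simp only [Category.assoc]
      _ = ι ≫ ((ψ : A ⟶ A) ≫ (E : A ⟶ A)) ≫ ((ψ ^ n : End A) : A ⟶ A) ≫ π := by
          rw [hπι]; simp only [Category.assoc]
      _ = (ι ≫ (E : A ⟶ A)) ≫ (ψ : A ⟶ A) ≫ ((ψ ^ n : End A) : A ⟶ A) ≫ π := by
          rw [hcomm]; simp only [Category.assoc]
      _ = ι ≫ (ψ : A ⟶ A) ≫ ((ψ ^ n : End A) : A ⟶ A) ≫ π := by rw [hE]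
      _ = ι ≫ ((ψ : A ⟶ A) ≫ ((ψ^n : End A) : A ⟶ A)) ≫ π := by simp only [Category.assoc]

lemma aeval_conj {A Y : C} (ι : Y ⟶ A) (π : A ⟶ Y) (ψ : End A) (E : End A) (χ : End Y)
    (hχ : (χ : Y ⟶ Y) = ι ≫ (ψ : A ⟶ A) ≫ π)
    (hιπ : ι ≫ π = 𝟙 Y) (hπι : π ≫ ι = (E : A ⟶ A))
    (hcomm : (ψ : A ⟶ A) ≫ E = (E : A ⟶ A) ≫ ψ) (hE : ι ≫ (E : A ⟶ A) = ι) (p : ℚ[X]) :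
    ((aeval χ p : End Y) : Y ⟶ Y) = ι ≫ ((aeval ψ p : End A) : A ⟶ A) ≫ π := by
  induction p using Polynomial.induction_on' with
  | add p q hp hq =>
    rw [map_add, map_add]
    show ((aeval χ p : End Y) : Y ⟶ Y) + ((aeval χ q : End Y) : Y ⟶ Y) = _
    rw [hp, hq]
    show _ = ι ≫ (((aeval ψ p : End A) : A ⟶ A) + ((aeval ψ q : End A) : A ⟶ A)) ≫ π
    rw [Preadditive.add_comp, Preadditive.comp_add]
  | monomial n a =>
    rw [aeval_monomial, aeval_monomial, Algebra.algebraMap_eq_smul_one,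
      Algebra.algebraMap_eq_smul_one, smul_mul_assoc, smul_mul_assoc, one_mul, one_mul]
    show (a • ((χ ^ n : End Y) : Y ⟶ Y)) = ι ≫ (a • ((ψ^n : End A) : A ⟶ A)) ≫ π
    rw [conj_pow ι π ψ E χ hχ hιπ hπι hcomm hE n]
    rw [CategoryTheory.Linear.smul_comp, CategoryTheory.Linear.comp_smul]

section Summand

variable {C : Type*} [Category C] [Preadditive C] [HasZeroObject C] [HasShift C ℤ]
  [∀ n : ℤ, (shiftFunctor C n).Additive] [Pretriangulated C]

lemma summand_distinguished (T TT : Triangle C) (hT : T ∈ distTriang C)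
    (j : TT ⟶ T) (q : T ⟶ TT) (hjq : j ≫ q = 𝟙 TT) : TT ∈ distTriang C := by
  have h1 : j.hom₁ ≫ q.hom₁ = 𝟙 _ := congrArg TriangleMorphism.hom₁ hjq
  have h2 : j.hom₂ ≫ q.hom₂ = 𝟙 _ := congrArg TriangleMorphism.hom₂ hjq
  have h3 : j.hom₃ ≫ q.hom₃ = 𝟙 _ := congrArg TriangleMorphism.hom₃ hjq
  obtain ⟨Q, v, w, hD⟩ := distinguished_cocone_triangle TT.mor₁
  set D := Triangle.mk TT.mor₁ v w with hDdef
  have hm1 : D.mor₁ = TT.mor₁ := rfl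
  have hm2 : D.mor₂ = v := rfl
  have hm3 : D.mor₃ = w := rfl
  obtain ⟨g₃, hg₂, hg₃⟩ : ∃ g₃ : T.obj₃ ⟶ Q, T.mor₂ ≫ g₃ = q.hom₂ ≫ v ∧
      T.mor₃ ≫ q.hom₁⟦1⟧' = g₃ ≫ w := complete_distinguished_triangle_morphism T D hT hD
    q.hom₁ q.hom₂ q.comm₁
  -- hg₂ : T.mor₂ ≫ g₃ = q.hom₂ ≫ D.mor₂;  hg₃ : T.mor₃ ≫ q.hom₁⟦1⟧' = g₃ ≫ D.mor₃
  set s : TT.obj₃ ⟶ Q := j.hom₃ ≫ g₃ with hs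
  have hs₂ : TT.mor₂ ≫ s = v := by
    rw [hs, ← Category.assoc, j.comm₂, Category.assoc, hg₂, ← Category.assoc, h2,
      Category.id_comp]
  have hs₃ : s ≫ w = TT.mor₃ := by
    have : s ≫ w = j.hom₃ ≫ T.mor₃ ≫ q.hom₁⟦1⟧' := by
      rw [hs, Category.assoc, ← hg₃]
    have h' : j.hom₃ ≫ T.mor₃ ≫ q.hom₁⟦1⟧' = TT.mor₃ := by
      rw [← Category.assoc, ← j.comm₃, Category.assoc, ← CategoryTheory.Functor.map_comp, h1,
        CategoryTheory.Functor.map_id, Category.comp_id]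
    exact this.trans h'
  have hTT12 : TT.mor₁ ≫ TT.mor₂ = 0 := by
    have : (TT.mor₁ ≫ TT.mor₂) ≫ j.hom₃ = 0 := by
      rw [Category.assoc, j.comm₂, ← Category.assoc, j.comm₁, Category.assoc,
        comp_distTriang_mor_zero₁₂ T hT, Limits.comp_zero]
    calc TT.mor₁ ≫ TT.mor₂ = ((TT.mor₁ ≫ TT.mor₂) ≫ j.hom₃) ≫ q.hom₃ := by
          rw [Category.assoc, Category.assoc, h3]; simp
      _ = 0 := by rw [this, Limits.zero_comp]
  have : IsIso s := by
    refine isIso_of_yoneda_map_bijective s (fun W => ⟨?_, ?_⟩)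
    · -- injective
      intro x y hxy
      simp only at hxy
      suffices h : ∀ φ : W ⟶ TT.obj₃, φ ≫ s = 0 → φ = 0 by
        have := h (x - y) (by rw [Preadditive.sub_comp, hxy, sub_self])
        rw [← sub_eq_zero]; exact this
      intro φ hφ
      have hφ3 : φ ≫ TT.mor₃ = 0 := by rw [← hs₃, ← Category.assoc, hφ, Limits.zero_comp]
      have h0 : (φ ≫ j.hom₃) ≫ T.mor₃ = 0 := by
        rw [Category.assoc, ← j.comm₃, ← Category.assoc, hφ3, Limits.zero_comp]
      obtain ⟨η', hη'⟩ := Triangle.coyoneda_exact₃ T hT (φ ≫ j.hom₃) h0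
      have hφη : φ = (η' ≫ q.hom₂) ≫ TT.mor₂ := by
        calc φ = (φ ≫ j.hom₃) ≫ q.hom₃ := by rw [Category.assoc, h3, Category.comp_id]
          _ = η' ≫ T.mor₂ ≫ q.hom₃ := by rw [hη', Category.assoc]
          _ = (η' ≫ q.hom₂) ≫ TT.mor₂ := by rw [q.comm₂, Category.assoc]
      have hη0 : (η' ≫ q.hom₂) ≫ D.mor₂ = 0 := by
        show (η' ≫ q.hom₂) ≫ v = 0
        rw [← hs₂, ← Category.assoc, ← hφη, hφ]
      obtain ⟨ξ, hξ⟩ : ∃ ξ : W ⟶ TT.obj₁, η' ≫ q.hom₂ = ξ ≫ TT.mor₁ :=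
        Triangle.coyoneda_exact₂ D hD (η' ≫ q.hom₂) hη0
      rw [hφη, hξ, Category.assoc]
      show ξ ≫ TT.mor₁ ≫ TT.mor₂ = 0
      rw [hTT12, Limits.comp_zero]
    · -- surjective
      intro φ
      have hψ : ((φ ≫ w) ≫ j.hom₁⟦1⟧') ≫ T.mor₁⟦1⟧' = 0 := by
        rw [Category.assoc, Category.assoc, ← CategoryTheory.Functor.map_comp, ← j.comm₁,
          CategoryTheory.Functor.map_comp]
        have : w ≫ TT.mor₁⟦1⟧' = 0 := comp_distTriang_mor_zero₃₁ D hD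
        rw [← Category.assoc, ← Category.assoc, Category.assoc (φ) (w), this]
        simp
      obtain ⟨ζ', hζ'⟩ := Triangle.coyoneda_exact₁ T hT ((φ ≫ w) ≫ j.hom₁⟦1⟧') hψ
      have hζ : (ζ' ≫ q.hom₃) ≫ TT.mor₃ = φ ≫ w := by
        rw [Category.assoc, ← q.comm₃, ← Category.assoc, ← hζ', Category.assoc,
          ← CategoryTheory.Functor.map_comp, h1, CategoryTheory.Functor.map_id, Category.comp_id]
      have h0 : (φ - (ζ' ≫ q.hom₃) ≫ s) ≫ D.mor₃ = 0 := by
        show (φ - (ζ' ≫ q.hom₃) ≫ s) ≫ w = 0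
        rw [Preadditive.sub_comp, Category.assoc, hs₃, hζ, sub_self]
      obtain ⟨η, hη⟩ : ∃ η : W ⟶ TT.obj₂, φ - (ζ' ≫ q.hom₃) ≫ s = η ≫ v :=
        Triangle.coyoneda_exact₃ D hD _ h0
      refine ⟨ζ' ≫ q.hom₃ + η ≫ TT.mor₂, ?_⟩
      show (ζ' ≫ q.hom₃ + η ≫ TT.mor₂) ≫ s = φ
      have : (η ≫ TT.mor₂) ≫ s = η ≫ v := by rw [Category.assoc, hs₂]
      rw [Preadditive.add_comp, this]
      have hη' : η ≫ v = φ - (ζ' ≫ q.hom₃) ≫ s := hη.symm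
      rw [hη']
      abel
  let u : TT ⟶ D := Triangle.homMk TT D (𝟙 _) (𝟙 _) s
    (by exact (Category.comp_id TT.mor₁).trans (Category.id_comp TT.mor₁).symm)
    (by exact hs₂.trans (Category.id_comp v).symm)
    (by exact ((congrArg (TT.mor₃ ≫ ·) ((shiftFunctor C (1:ℤ)).map_id TT.obj₁)).trans
      (Category.comp_id _)).trans hs₃.symm)
  haveI : IsIso u := by
    apply Triangle.isIso_of_isIsos
    · exact (inferInstance : IsIso (𝟙 TT.obj₁))
    · exact (inferInstance : IsIso (𝟙 TT.obj₂))
    · exact (inferInstance : IsIso s)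
  exact isomorphic_distinguished D hD TT (asIso u)

end Summand

end Stmt4Aux

namespace Stmt4CRT

open Polynomial

lemma crt (s : Finset ℚ) (K : ℕ) :
    ∃ e : ℚ → ℚ[X],
      (∀ a, (∏ γ ∈ s, (X - C γ) ^ K) ∣ (X - C a) ^ K * e a) ∧
      (∀ a b, a ≠ b → (∏ γ ∈ s, (X - C γ) ^ K) ∣ e a * e b) ∧
      ((∏ γ ∈ s, (X - C γ) ^ K) ∣ (∑ a ∈ s, e a) - 1) ∧
      (∀ a, (∏ γ ∈ s, (X - C γ) ^ K) ∣ e a * e a - e a) ∧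
      (∀ a, a ∉ s → e a = 0) := by
  classical
  have hcop : ∀ a b : ℚ, a ≠ b → IsCoprime ((X - C a) ^ K) ((X - C b) ^ K) := by
    intro a b hab
    exact (Polynomial.pairwise_coprime_X_sub_C (Function.injective_id (α := ℚ)) hab).pow
  have hco : ∀ a : ℚ, ∃ u v : ℚ[X], a ∈ s →
      u * ((X - C a) ^ K) + v * (∏ γ ∈ s.erase a, (X - C γ) ^ K) = 1 := by
    intro a
    by_cases ha : a ∈ s
    · obtain ⟨u, v, huv⟩ : IsCoprime ((X - C a) ^ K) (∏ γ ∈ s.erase a, (X - C γ) ^ K) :=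
        IsCoprime.prod_right (fun b hb => hcop a b (Finset.ne_of_mem_erase hb).symm)
      exact ⟨u, v, fun _ => huv⟩
    · exact ⟨0, 0, fun h => absurd h ha⟩
  choose u v huv using hco
  set e : ℚ → ℚ[X] := fun a =>
    if a ∈ s then v a * ∏ γ ∈ s.erase a, (X - C γ) ^ K else 0 with he
  have hfg : ∀ a, a ∈ s →
      ((X - C a) ^ K) * ∏ γ ∈ s.erase a, (X - C γ) ^ K = ∏ γ ∈ s, (X - C γ) ^ K :=
    fun a ha => Finset.mul_prod_erase s (fun γ => (X - C γ) ^ K) ha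
  have hfdvdg : ∀ a b : ℚ, a ∈ s → a ≠ b →
      ((X - C a) ^ K) ∣ ∏ γ ∈ s.erase b, (X - C γ) ^ K := by
    intro a b ha hab
    exact Finset.dvd_prod_of_mem (fun γ => (X - C γ) ^ K) (Finset.mem_erase.2 ⟨hab, ha⟩)
  have hout : ∀ a, a ∉ s → e a = 0 := by
    intro a ha; rw [he]; simp only [if_neg ha]
  refine ⟨e, ?_, ?_, ?_, ?_, hout⟩
  · intro a
    by_cases ha : a ∈ s
    · rw [he]
      simp only [if_pos ha]
      exact ⟨v a, by linear_combination (v a) * hfg a ha⟩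
    · rw [he]; simp only [if_neg ha, mul_zero, dvd_zero]
  · intro a b hab
    by_cases ha : a ∈ s
    · by_cases hb : b ∈ s
      · rw [he]
        simp only [if_pos ha, if_pos hb]
        obtain ⟨h, hh⟩ := hfdvdg b a hb hab.symm
        exact ⟨v a * v b * h, by
          linear_combination (v a * v b * h) * hfg b hb
            + (v a * v b * (∏ γ ∈ s.erase b, (X - C γ) ^ K)) * hh⟩
      · rw [he]; simp only [if_neg hb, mul_zero, dvd_zero]
    · rw [he]; simp only [if_neg ha, zero_mul, dvd_zero]
  · refine Finset.prod_dvd_of_coprime ?_ ?_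
    · intro a ha b hb hab
      exact hcop a b hab
    · intro a ha
      have h1 : (∑ b ∈ s, e b) - 1 = (e a - 1) + ∑ b ∈ s.erase a, e b := by
        rw [← Finset.sum_erase_add s e ha]; ring
      rw [h1]
      refine dvd_add ?_ (Finset.dvd_sum ?_)
      · have h2 : e a = v a * ∏ γ ∈ s.erase a, (X - C γ) ^ K := by
          rw [he]; simp only [if_pos ha]
        exact ⟨-(u a), by rw [h2]; linear_combination huv a ha⟩
      · intro b hb
        rcases Finset.mem_erase.1 hb with ⟨hba, hbs⟩
        have h2 : e b = v b * ∏ γ ∈ s.erase b, (X - C γ) ^ K := by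
          rw [he]; simp only [if_pos hbs]
        rw [h2]
        exact Dvd.dvd.mul_left (hfdvdg a b ha (Ne.symm hba)) _
  · intro a
    by_cases ha : a ∈ s
    · have h2 : e a = v a * ∏ γ ∈ s.erase a, (X - C γ) ^ K := by
        rw [he]; simp only [if_pos ha]
      rw [h2]
      exact ⟨-(u a * v a), by
        linear_combination (v a * (∏ γ ∈ s.erase a, (X - C γ) ^ K)) * huv a ha
          - (u a * v a) * hfg a ha⟩
    · rw [he]; simp only [if_neg ha, mul_zero, zero_sub, sub_zero, dvd_neg, dvd_zero]

end Stmt4CRT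

/-- In a `ℚ`-linear pseudo-abelian pretriangulated category, given a
distinguished triangle `T : A ⟶ B ⟶ C ⟶ A⟦1⟧` with an endomorphism `φ` of the triangle
such that `A` and `C` admit finite decompositions into generalized eigenspaces for
`φ.hom₁`, `φ.hom₃` (with rational eigenvalues), there is a finite set `s` of rational
numbers and a `φ`-equivariant direct sum decomposition of the triangle `T` into triangles
`TT a` (the eigenvalue-`a` parts, zero for `a ∉ s`), compatible with the three maps of the
triangle, such that on `TT a` some positive power of `(φ - a • id)` vanishes and each
triangle `TT a` is distinguished. -/
theorem stmt4 {𝒯 : Type*} [Category 𝒯] [Preadditive 𝒯] [Linear ℚ 𝒯]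
    [Limits.HasZeroObject 𝒯] [HasShift 𝒯 ℤ]
    [∀ n : ℤ, (shiftFunctor 𝒯 n).Additive] [Pretriangulated 𝒯]
    [IsIdempotentComplete 𝒯]
    (T : Triangle 𝒯) (hT : T ∈ distTriang 𝒯) (φ : T ⟶ T)
    (hA : ∃ (n : ℕ) (α : Fin n → ℚ), Function.Injective α ∧
      ∃ m : Fin n → ℕ, (∀ i, 0 < m i) ∧
        Polynomial.aeval (A := End T.obj₁) φ.hom₁
          (∏ i, (Polynomial.X - Polynomial.C (α i)) ^ m i) = 0)
    (hC : ∃ (k : ℕ) (β : Fin k → ℚ), Function.Injective β ∧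
      ∃ l : Fin k → ℕ, (∀ j, 0 < l j) ∧
        Polynomial.aeval (A := End T.obj₃) φ.hom₃
          (∏ j, (Polynomial.X - Polynomial.C (β j)) ^ l j) = 0) :
    ∃ (s : Finset ℚ) (TT : ℚ → Triangle 𝒯)
      (ι : ∀ a : ℚ, TT a ⟶ T) (p : ∀ a : ℚ, T ⟶ TT a) (ε : ∀ a : ℚ, TT a ⟶ TT a),
      -- each eigenvalue triangle is distinguished
      (∀ a : ℚ, TT a ∈ distTriang 𝒯) ∧
      -- the eigenvalue triangles are direct summands of `T` …
      (∀ a : ℚ, ι a ≫ p a = 𝟙 (TT a)) ∧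
      -- … pairwise orthogonal …
      (∀ a b : ℚ, a ≠ b →
        (ι a).hom₁ ≫ (p b).hom₁ = 0 ∧ (ι a).hom₂ ≫ (p b).hom₂ = 0 ∧
        (ι a).hom₃ ≫ (p b).hom₃ = 0) ∧
      -- … and they decompose `T` as a direct sum over the finitely many eigenvalues
      ((∑ a ∈ s, (p a).hom₁ ≫ (ι a).hom₁) = 𝟙 T.obj₁) ∧
      ((∑ a ∈ s, (p a).hom₂ ≫ (ι a).hom₂) = 𝟙 T.obj₂) ∧
      ((∑ a ∈ s, (p a).hom₃ ≫ (ι a).hom₃) = 𝟙 T.obj₃) ∧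
      -- the eigenvalue triangles for non-occurring eigenvalues are zero
      (∀ a : ℚ, a ∉ s →
        IsZero (TT a).obj₁ ∧ IsZero (TT a).obj₂ ∧ IsZero (TT a).obj₃) ∧
      -- the decomposition is `φ`-equivariant, `ε a` being the endomorphism induced by `φ`
      (∀ a : ℚ, ι a ≫ φ = ε a ≫ ι a) ∧
      (∀ a : ℚ, φ ≫ p a = p a ≫ ε a) ∧
      -- on the summand for eigenvalue `a`, some positive power of `φ - a • id` vanishes
      (∀ a : ℚ, ∃ k : ℕ, 0 < k ∧
        Polynomial.aeval (A := End (TT a).obj₁) (ε a).hom₁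
          ((Polynomial.X - Polynomial.C a) ^ k) = 0 ∧
        Polynomial.aeval (A := End (TT a).obj₂) (ε a).hom₂
          ((Polynomial.X - Polynomial.C a) ^ k) = 0 ∧
        Polynomial.aeval (A := End (TT a).obj₃) (ε a).hom₃
          ((Polynomial.X - Polynomial.C a) ^ k) = 0) := by
  classical
  obtain ⟨n, α, hαinj, m, hm, hpA⟩ := hA
  obtain ⟨nc, β, hβinj, l, hl, hpC⟩ := hC
  -- the exponent and the eigenvalue set
  set K : ℕ := (∑ i, m i) + (∑ j, l j) + 1 with hK
  have hKpos : 0 < K := Nat.succ_pos _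
  set s : Finset ℚ := Finset.image α Finset.univ ∪ Finset.image β Finset.univ with hsdef
  set Q : Polynomial ℚ := ∏ γ ∈ s, (Polynomial.X - Polynomial.C γ) ^ K with hQdef
  -- divisibility of the annihilating polynomials
  have hprod_dvd : ∀ (N : ℕ) {nn : ℕ} (δ : Fin nn → ℚ) (_ : Function.Injective δ)
      (mm : Fin nn → ℕ) (_ : ∀ i, mm i ≤ N) (_ : ∀ i, δ i ∈ s),
      (∏ i, (Polynomial.X - Polynomial.C (δ i)) ^ (mm i)) ∣
        ∏ γ ∈ s, (Polynomial.X - Polynomial.C γ) ^ N := by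
    intro N nn δ hδ mm hmm hmem
    have h1 : (∏ i, (Polynomial.X - Polynomial.C (δ i)) ^ (mm i)) ∣
        ∏ i, (Polynomial.X - Polynomial.C (δ i)) ^ N :=
      Finset.prod_dvd_prod_of_dvd _ _ (fun i _ => pow_dvd_pow _ (hmm i))
    refine h1.trans ?_
    have h2 : (∏ i, (Polynomial.X - Polynomial.C (δ i)) ^ N) =
        ∏ γ ∈ Finset.image δ Finset.univ, (Polynomial.X - Polynomial.C γ) ^ N := by
      rw [Finset.prod_image (fun x _ y _ h => hδ h)]
    rw [h2]
    refine Finset.prod_dvd_prod_of_subset _ _ _ (fun γ hγ => ?_)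
    obtain ⟨i, _, rfl⟩ := Finset.mem_image.1 hγ
    exact hmem i
  have hmA : ∀ i, m i ≤ ∑ i, m i :=
    fun i => Finset.single_le_sum (fun i _ => Nat.zero_le _) (Finset.mem_univ i)
  have hmC : ∀ j, l j ≤ ∑ j, l j :=
    fun j => Finset.single_le_sum (fun j _ => Nat.zero_le _) (Finset.mem_univ j)
  have hmemA : ∀ i, α i ∈ s := fun i => Finset.mem_union_left _
    (Finset.mem_image.2 ⟨i, Finset.mem_univ i, rfl⟩)
  have hmemC : ∀ j, β j ∈ s := fun j => Finset.mem_union_right _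
    (Finset.mem_image.2 ⟨j, Finset.mem_univ j, rfl⟩)
  have hdvdA : (∏ i, (Polynomial.X - Polynomial.C (α i)) ^ (m i)) ∣ Q := by
    rw [hQdef]
    exact hprod_dvd K α hαinj m (fun i => le_trans (hmA i) (by omega)) hmemA
  have hdvdC : (∏ j, (Polynomial.X - Polynomial.C (β j)) ^ (l j)) ∣ Q := by
    rw [hQdef]
    exact hprod_dvd K β hβinj l (fun j => le_trans (hmC j) (by omega)) hmemC
  have hdvdB : (∏ i, (Polynomial.X - Polynomial.C (α i)) ^ (m i))
      * (∏ j, (Polynomial.X - Polynomial.C (β j)) ^ (l j)) ∣ Q := by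
    have hA' := hprod_dvd (∑ i, m i) α hαinj m hmA hmemA
    have hC' := hprod_dvd (∑ j, l j) β hβinj l hmC hmemC
    have hmul := mul_dvd_mul hA' hC'
    have heqp : (∏ γ ∈ s, (Polynomial.X - Polynomial.C γ) ^ (∑ i, m i))
        * (∏ γ ∈ s, (Polynomial.X - Polynomial.C γ) ^ (∑ j, l j))
        = ∏ γ ∈ s, (Polynomial.X - Polynomial.C γ) ^ ((∑ i, m i) + (∑ j, l j)) := by
      rw [← Finset.prod_mul_distrib]
      exact Finset.prod_congr rfl (fun γ _ => (pow_add _ _ _).symm)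
    rw [heqp] at hmul
    refine hmul.trans ?_
    rw [hQdef]
    exact Finset.prod_dvd_prod_of_dvd _ _ (fun γ _ => pow_dvd_pow _ (by omega))
  -- vanishing of `Q` on the three objects
  have hQ1 : (Polynomial.aeval (A := End T.obj₁) φ.hom₁ Q) = 0 := by
    obtain ⟨t, ht⟩ := hdvdA
    rw [ht, map_mul, hpA, zero_mul]
  have hQ3 : (Polynomial.aeval (A := End T.obj₃) φ.hom₃ Q) = 0 := by
    obtain ⟨t, ht⟩ := hdvdC
    rw [ht, map_mul, hpC, zero_mul]
  -- commutation of polynomial evaluations with the triangle maps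
  have hcomm1 : ∀ p : Polynomial ℚ,
      T.mor₁ ≫ (Polynomial.aeval (A := End T.obj₂) φ.hom₂ p : T.obj₂ ⟶ T.obj₂)
        = (Polynomial.aeval (A := End T.obj₁) φ.hom₁ p : T.obj₁ ⟶ T.obj₁) ≫ T.mor₁ :=
    fun p => Stmt4Aux.comm_aeval T.mor₁ φ.hom₁ φ.hom₂ φ.comm₁ p
  have hcomm2 : ∀ p : Polynomial ℚ,
      T.mor₂ ≫ (Polynomial.aeval (A := End T.obj₃) φ.hom₃ p : T.obj₃ ⟶ T.obj₃)
        = (Polynomial.aeval (A := End T.obj₂) φ.hom₂ p : T.obj₂ ⟶ T.obj₂) ≫ T.mor₂ :=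
    fun p => Stmt4Aux.comm_aeval T.mor₂ φ.hom₂ φ.hom₃ φ.comm₂ p
  have hcomm3 : ∀ p : Polynomial ℚ,
      T.mor₃ ≫ (shiftFunctor 𝒯 (1:ℤ)).map
          ((Polynomial.aeval (A := End T.obj₁) φ.hom₁ p : T.obj₁ ⟶ T.obj₁))
        = (Polynomial.aeval (A := End T.obj₃) φ.hom₃ p : T.obj₃ ⟶ T.obj₃) ≫ T.mor₃ := by
    intro p
    rw [Stmt4Aux.map_aeval (shiftFunctor 𝒯 (1:ℤ)) φ.hom₁
      ((shiftFunctor 𝒯 (1:ℤ)).map φ.hom₁) rfl p]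
    exact Stmt4Aux.comm_aeval T.mor₃ φ.hom₃ ((shiftFunctor 𝒯 (1:ℤ)).map φ.hom₁) φ.comm₃ p
  -- vanishing of `Q` on the middle object
  have hQ2 : (Polynomial.aeval (A := End T.obj₂) φ.hom₂ Q) = 0 := by
    have h0 : T.mor₁ ≫ (Polynomial.aeval (A := End T.obj₂) φ.hom₂
        (∏ i, (Polynomial.X - Polynomial.C (α i)) ^ (m i)) : T.obj₂ ⟶ T.obj₂) = 0 := by
      rw [hcomm1, hpA]
      show (0 : T.obj₁ ⟶ T.obj₁) ≫ T.mor₁ = 0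
      rw [Limits.zero_comp]
    obtain ⟨g, hg⟩ := Triangle.yoneda_exact₂ T hT _ h0
    have hB : (Polynomial.aeval (A := End T.obj₂) φ.hom₂
        ((∏ i, (Polynomial.X - Polynomial.C (α i)) ^ (m i))
          * (∏ j, (Polynomial.X - Polynomial.C (β j)) ^ (l j)))) = 0 := by
      rw [map_mul, End.mul_def, hg]
      have : (Polynomial.aeval (A := End T.obj₂) φ.hom₂
          (∏ j, (Polynomial.X - Polynomial.C (β j)) ^ (l j)) : T.obj₂ ⟶ T.obj₂) ≫ T.mor₂
          = 0 := by
        rw [← hcomm2, hpC]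
        show T.mor₂ ≫ (0 : T.obj₃ ⟶ T.obj₃) = 0
        rw [Limits.comp_zero]
      show (Polynomial.aeval (A := End T.obj₂) φ.hom₂
          (∏ j, (Polynomial.X - Polynomial.C (β j)) ^ (l j)) : T.obj₂ ⟶ T.obj₂)
          ≫ T.mor₂ ≫ g = 0
      rw [← Category.assoc, this, Limits.zero_comp]
    obtain ⟨t, ht⟩ := hdvdB
    rw [ht, map_mul, hB, zero_mul]
  -- the CRT idempotent polynomials
  obtain ⟨e, hfe, hee, hsum, hidem, hout⟩ := Stmt4CRT.crt s K
  rw [← hQdef] at hfe hee hsum hidem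
  -- generic facts about evaluations
  have keyComm : ∀ (Xo : 𝒯) (ψ : End Xo) (p : Polynomial ℚ),
      (ψ : Xo ⟶ Xo) ≫ (Polynomial.aeval (A := End Xo) ψ p : Xo ⟶ Xo)
        = (Polynomial.aeval (A := End Xo) ψ p : Xo ⟶ Xo) ≫ ψ :=
    fun Xo ψ p => Stmt4Aux.comm_aeval (ψ : Xo ⟶ Xo) ψ ψ rfl p
  have keyOrth : ∀ (Xo : 𝒯) (ψ : End Xo), (Polynomial.aeval (A := End Xo) ψ Q) = 0 →
      ∀ a b : ℚ, a ≠ b →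
      (Polynomial.aeval (A := End Xo) ψ (e a) : Xo ⟶ Xo)
        ≫ (Polynomial.aeval (A := End Xo) ψ (e b) : Xo ⟶ Xo) = 0 := by
    intro Xo ψ hψ a b hab
    obtain ⟨t, ht⟩ := hee b a hab.symm
    have : (Polynomial.aeval (A := End Xo) ψ (e b * e a)) = 0 := by
      rw [ht, map_mul, hψ, zero_mul]
    rw [map_mul, End.mul_def] at this
    exact this
  have keyNil : ∀ (Xo : 𝒯) (ψ : End Xo), (Polynomial.aeval (A := End Xo) ψ Q) = 0 →
      ∀ a : ℚ,
      (Polynomial.aeval (A := End Xo) ψ (e a) : Xo ⟶ Xo)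
        ≫ (Polynomial.aeval (A := End Xo) ψ ((Polynomial.X - Polynomial.C a) ^ K) : Xo ⟶ Xo)
        = 0 := by
    intro Xo ψ hψ a
    obtain ⟨t, ht⟩ := hfe a
    have : (Polynomial.aeval (A := End Xo) ψ
        ((Polynomial.X - Polynomial.C a) ^ K * e a)) = 0 := by
      rw [ht, map_mul, hψ, zero_mul]
    rw [map_mul, End.mul_def] at this
    exact this
  have keyIdem : ∀ (Xo : 𝒯) (ψ : End Xo), (Polynomial.aeval (A := End Xo) ψ Q) = 0 →
      ∀ a : ℚ,
      (Polynomial.aeval (A := End Xo) ψ (e a) : Xo ⟶ Xo)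
        ≫ (Polynomial.aeval (A := End Xo) ψ (e a) : Xo ⟶ Xo)
        = (Polynomial.aeval (A := End Xo) ψ (e a) : Xo ⟶ Xo) := by
    intro Xo ψ hψ a
    obtain ⟨t, ht⟩ := hidem a
    have h1 : (Polynomial.aeval (A := End Xo) ψ (e a * e a))
        = (Polynomial.aeval (A := End Xo) ψ (e a)) := by
      have : e a * e a = e a + Q * t := by linear_combination ht
      rw [this, map_add, map_mul, hψ, zero_mul, add_zero]
    rw [map_mul, End.mul_def] at h1
    exact h1
  -- split the idempotents
  have hsplit : ∀ (Xo : 𝒯) (ψ : End Xo), (Polynomial.aeval (A := End Xo) ψ Q) = 0 →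
      ∀ a : ℚ, ∃ (Y : 𝒯) (ι : Y ⟶ Xo) (π : Xo ⟶ Y), ι ≫ π = 𝟙 Y ∧
        π ≫ ι = (Polynomial.aeval (A := End Xo) ψ (e a) : Xo ⟶ Xo) := by
    intro Xo ψ hψ a
    exact IsIdempotentComplete.idempotents_split Xo _ (keyIdem Xo ψ hψ a)
  choose Y₁ ι₁ π₁ hιπ₁ hπι₁ using hsplit T.obj₁ φ.hom₁ hQ1
  choose Y₂ ι₂ π₂ hιπ₂ hπι₂ using hsplit T.obj₂ φ.hom₂ hQ2
  choose Y₃ ι₃ π₃ hιπ₃ hπι₃ using hsplit T.obj₃ φ.hom₃ hQ3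
  -- abbreviations for the idempotent evaluations
  have key₁ : ∀ {Xo : 𝒯} {Y : 𝒯} (ι : Y ⟶ Xo) (π : Xo ⟶ Y) (E : Xo ⟶ Xo),
      ι ≫ π = 𝟙 Y → π ≫ ι = E → ι ≫ E = ι := by
    intro Xo Y ι π E hιπ hπι
    rw [← hπι, ← Category.assoc, hιπ, Category.id_comp]
  have key₂ : ∀ {Xo : 𝒯} {Y : 𝒯} (ι : Y ⟶ Xo) (π : Xo ⟶ Y) (E : Xo ⟶ Xo),
      ι ≫ π = 𝟙 Y → π ≫ ι = E → E ≫ π = π := by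
    intro Xo Y ι π E hιπ hπι
    rw [← hπι, Category.assoc, hιπ, Category.comp_id]
  have kι₁ : ∀ a, ι₁ a ≫ (Polynomial.aeval (A := End T.obj₁) φ.hom₁ (e a) : T.obj₁ ⟶ T.obj₁)
      = ι₁ a := fun a => key₁ _ _ _ (hιπ₁ a) (hπι₁ a)
  have kι₂ : ∀ a, ι₂ a ≫ (Polynomial.aeval (A := End T.obj₂) φ.hom₂ (e a) : T.obj₂ ⟶ T.obj₂)
      = ι₂ a := fun a => key₁ _ _ _ (hιπ₂ a) (hπι₂ a)
  have kι₃ : ∀ a, ι₃ a ≫ (Polynomial.aeval (A := End T.obj₃) φ.hom₃ (e a) : T.obj₃ ⟶ T.obj₃)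
      = ι₃ a := fun a => key₁ _ _ _ (hιπ₃ a) (hπι₃ a)
  have kπ₁ : ∀ a, (Polynomial.aeval (A := End T.obj₁) φ.hom₁ (e a) : T.obj₁ ⟶ T.obj₁) ≫ π₁ a
      = π₁ a := fun a => key₂ _ _ _ (hιπ₁ a) (hπι₁ a)
  have kπ₂ : ∀ a, (Polynomial.aeval (A := End T.obj₂) φ.hom₂ (e a) : T.obj₂ ⟶ T.obj₂) ≫ π₂ a
      = π₂ a := fun a => key₂ _ _ _ (hιπ₂ a) (hπι₂ a)
  have kπ₃ : ∀ a, (Polynomial.aeval (A := End T.obj₃) φ.hom₃ (e a) : T.obj₃ ⟶ T.obj₃) ≫ π₃ a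
      = π₃ a := fun a => key₂ _ _ _ (hιπ₃ a) (hπι₃ a)
  -- the triangles
  set TTf : ℚ → Triangle 𝒯 := fun a => Triangle.mk
    (ι₁ a ≫ T.mor₁ ≫ π₂ a) (ι₂ a ≫ T.mor₂ ≫ π₃ a)
    (ι₃ a ≫ T.mor₃ ≫ (shiftFunctor 𝒯 (1:ℤ)).map (π₁ a)) with hTTf
  -- inclusion of each eigen-triangle
  have hc1 : ∀ a, (ι₁ a ≫ T.mor₁ ≫ π₂ a) ≫ ι₂ a = ι₁ a ≫ T.mor₁ := by
    intro a
    rw [Category.assoc, Category.assoc, hπι₂ a, hcomm1 (e a), ← Category.assoc, kι₁ a]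
  have hc2 : ∀ a, (ι₂ a ≫ T.mor₂ ≫ π₃ a) ≫ ι₃ a = ι₂ a ≫ T.mor₂ := by
    intro a
    rw [Category.assoc, Category.assoc, hπι₃ a, hcomm2 (e a), ← Category.assoc, kι₂ a]
  have hc3 : ∀ a, (ι₃ a ≫ T.mor₃ ≫ (shiftFunctor 𝒯 (1:ℤ)).map (π₁ a))
      ≫ (shiftFunctor 𝒯 (1:ℤ)).map (ι₁ a) = ι₃ a ≫ T.mor₃ := by
    intro a
    rw [Category.assoc, Category.assoc, ← CategoryTheory.Functor.map_comp, hπι₁ a,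
      hcomm3 (e a), ← Category.assoc, kι₃ a]
  have hq1 : ∀ a, π₁ a ≫ (ι₁ a ≫ T.mor₁ ≫ π₂ a) = T.mor₁ ≫ π₂ a := by
    intro a
    rw [← Category.assoc, hπι₁ a, ← Category.assoc, ← hcomm1 (e a), Category.assoc, kπ₂ a]
  have hq2 : ∀ a, π₂ a ≫ (ι₂ a ≫ T.mor₂ ≫ π₃ a) = T.mor₂ ≫ π₃ a := by
    intro a
    rw [← Category.assoc, hπι₂ a, ← Category.assoc, ← hcomm2 (e a), Category.assoc, kπ₃ a]
  have hq3 : ∀ a, π₃ a ≫ (ι₃ a ≫ T.mor₃ ≫ (shiftFunctor 𝒯 (1:ℤ)).map (π₁ a))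
      = T.mor₃ ≫ (shiftFunctor 𝒯 (1:ℤ)).map (π₁ a) := by
    intro a
    rw [← Category.assoc, hπι₃ a, ← Category.assoc, ← hcomm3 (e a), Category.assoc,
      ← CategoryTheory.Functor.map_comp, kπ₁ a]
  set ιT : ∀ a : ℚ, TTf a ⟶ T := fun a =>
    Triangle.homMk (TTf a) T (ι₁ a) (ι₂ a) (ι₃ a) (hc1 a) (hc2 a) (hc3 a) with hιT
  set pT : ∀ a : ℚ, T ⟶ TTf a := fun a =>
    Triangle.homMk T (TTf a) (π₁ a) (π₂ a) (π₃ a) (hq1 a).symm (hq2 a).symm (hq3 a).symm with hpT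
  -- the induced endomorphisms
  have hε1 : ∀ a, (ι₁ a ≫ T.mor₁ ≫ π₂ a) ≫ (ι₂ a ≫ φ.hom₂ ≫ π₂ a)
      = (ι₁ a ≫ φ.hom₁ ≫ π₁ a) ≫ (ι₁ a ≫ T.mor₁ ≫ π₂ a) := by
    intro a
    simp only [Category.assoc]
    slice_lhs 3 4 => rw [hπι₂ a]
    slice_lhs 2 3 => rw [hcomm1 (e a)]
    slice_lhs 1 2 => rw [kι₁ a]
    slice_lhs 2 3 => rw [φ.comm₁]
    slice_rhs 3 4 => rw [hπι₁ a]
    slice_rhs 2 3 => rw [keyComm T.obj₁ φ.hom₁ (e a)]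
    slice_rhs 1 2 => rw [kι₁ a]
    simp only [Category.assoc]
  have hε2 : ∀ a, (ι₂ a ≫ T.mor₂ ≫ π₃ a) ≫ (ι₃ a ≫ φ.hom₃ ≫ π₃ a)
      = (ι₂ a ≫ φ.hom₂ ≫ π₂ a) ≫ (ι₂ a ≫ T.mor₂ ≫ π₃ a) := by
    intro a
    simp only [Category.assoc]
    slice_lhs 3 4 => rw [hπι₃ a]
    slice_lhs 2 3 => rw [hcomm2 (e a)]
    slice_lhs 1 2 => rw [kι₂ a]
    slice_lhs 2 3 => rw [φ.comm₂]
    slice_rhs 3 4 => rw [hπι₂ a]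
    slice_rhs 2 3 => rw [keyComm T.obj₂ φ.hom₂ (e a)]
    slice_rhs 1 2 => rw [kι₂ a]
    simp only [Category.assoc]
  have hε3 : ∀ a, (ι₃ a ≫ T.mor₃ ≫ (shiftFunctor 𝒯 (1:ℤ)).map (π₁ a))
      ≫ (shiftFunctor 𝒯 (1:ℤ)).map (ι₁ a ≫ φ.hom₁ ≫ π₁ a)
      = (ι₃ a ≫ φ.hom₃ ≫ π₃ a) ≫ (ι₃ a ≫ T.mor₃ ≫ (shiftFunctor 𝒯 (1:ℤ)).map (π₁ a)) := by
    intro a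
    simp only [Category.assoc, CategoryTheory.Functor.map_comp]
    slice_lhs 3 4 => rw [← CategoryTheory.Functor.map_comp, hπι₁ a]
    slice_lhs 2 3 => rw [hcomm3 (e a)]
    slice_lhs 1 2 => rw [kι₃ a]
    slice_lhs 2 3 => rw [φ.comm₃]
    slice_rhs 3 4 => rw [hπι₃ a]
    slice_rhs 2 3 => rw [keyComm T.obj₃ φ.hom₃ (e a)]
    slice_rhs 1 2 => rw [kι₃ a]
    simp only [Category.assoc]
  set εT : ∀ a : ℚ, TTf a ⟶ TTf a := fun a =>
    Triangle.homMk (TTf a) (TTf a) (ι₁ a ≫ φ.hom₁ ≫ π₁ a) (ι₂ a ≫ φ.hom₂ ≫ π₂ a)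
      (ι₃ a ≫ φ.hom₃ ≫ π₃ a) (hε1 a) (hε2 a) (hε3 a) with hεT
  -- retraction
  have hretr : ∀ a, ιT a ≫ pT a = 𝟙 (TTf a) := by
    intro a
    apply Triangle.hom_ext
    · show ι₁ a ≫ π₁ a = 𝟙 _
      exact hιπ₁ a
    · show ι₂ a ≫ π₂ a = 𝟙 _
      exact hιπ₂ a
    · show ι₃ a ≫ π₃ a = 𝟙 _
      exact hιπ₃ a
  -- orthogonality of the pieces
  have horth : ∀ {Xo : 𝒯} {Y Y' : 𝒯} (ι : Y ⟶ Xo) (π' : Xo ⟶ Y') (E E' : Xo ⟶ Xo),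
      ι ≫ E = ι → E' ≫ π' = π' → E ≫ E' = 0 → ι ≫ π' = 0 := by
    intro Xo Y Y' ι π' E E' hE hπ' h0
    have h1 : ι ≫ π' = ι ≫ E ≫ E' ≫ π' := by
      conv_lhs => rw [← hπ', ← hE]
      simp only [Category.assoc]
    rw [h1]
    slice_lhs 2 3 => rw [h0]
    simp only [Limits.zero_comp, Limits.comp_zero]
  -- sums of the idempotents
  have hsumEval : ∀ (Xo : 𝒯) (ψ : End Xo), (Polynomial.aeval (A := End Xo) ψ Q) = 0 →
      (∑ a ∈ s, ((Polynomial.aeval (A := End Xo) ψ (e a) : Xo ⟶ Xo))) = 𝟙 Xo := by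
    intro Xo ψ hψ
    obtain ⟨t, ht⟩ := hsum
    have h1 : (∑ a ∈ s, e a) = 1 + Q * t := by linear_combination ht
    have h2 : (Polynomial.aeval (A := End Xo) ψ (∑ a ∈ s, e a)) = 1 := by
      rw [h1, map_add, map_one, map_mul, hψ, zero_mul, add_zero]
    rw [map_sum] at h2
    exact h2.trans End.one_def
  -- the final assembly
  refine ⟨s, TTf, ιT, pT, εT, ?_, hretr, ?_, ?_, ?_, ?_, ?_, ?_, ?_, ?_⟩
  · -- distinguished
    intro a
    exact Stmt4Aux.summand_distinguished T (TTf a) hT (ιT a) (pT a) (hretr a)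
  · -- orthogonality
    intro a b hab
    refine ⟨?_, ?_, ?_⟩
    · show ι₁ a ≫ π₁ b = 0
      exact horth (ι₁ a) (π₁ b) _ _ (kι₁ a) (kπ₁ b) (keyOrth T.obj₁ φ.hom₁ hQ1 a b hab)
    · show ι₂ a ≫ π₂ b = 0
      exact horth (ι₂ a) (π₂ b) _ _ (kι₂ a) (kπ₂ b) (keyOrth T.obj₂ φ.hom₂ hQ2 a b hab)
    · show ι₃ a ≫ π₃ b = 0
      exact horth (ι₃ a) (π₃ b) _ _ (kι₃ a) (kπ₃ b) (keyOrth T.obj₃ φ.hom₃ hQ3 a b hab)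
  · -- sum on obj₁
    have h1 : ∀ a ∈ s, (pT a).hom₁ ≫ (ιT a).hom₁
        = (Polynomial.aeval (A := End T.obj₁) φ.hom₁ (e a) : T.obj₁ ⟶ T.obj₁) :=
      fun a _ => hπι₁ a
    rw [Finset.sum_congr rfl h1]
    exact hsumEval T.obj₁ φ.hom₁ hQ1
  · -- sum on obj₂
    have h1 : ∀ a ∈ s, (pT a).hom₂ ≫ (ιT a).hom₂
        = (Polynomial.aeval (A := End T.obj₂) φ.hom₂ (e a) : T.obj₂ ⟶ T.obj₂) :=
      fun a _ => hπι₂ a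
    rw [Finset.sum_congr rfl h1]
    exact hsumEval T.obj₂ φ.hom₂ hQ2
  · -- sum on obj₃
    have h1 : ∀ a ∈ s, (pT a).hom₃ ≫ (ιT a).hom₃
        = (Polynomial.aeval (A := End T.obj₃) φ.hom₃ (e a) : T.obj₃ ⟶ T.obj₃) :=
      fun a _ => hπι₃ a
    rw [Finset.sum_congr rfl h1]
    exact hsumEval T.obj₃ φ.hom₃ hQ3
  · -- vanishing outside `s`
    intro a ha
    have he0 : e a = 0 := hout a ha
    refine ⟨?_, ?_, ?_⟩
    · rw [Limits.IsZero.iff_id_eq_zero]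
      show 𝟙 (Y₁ a) = 0
      have hι0 : ι₁ a = 0 := by
        rw [← kι₁ a, he0, map_zero]
        exact Limits.comp_zero
      rw [← hιπ₁ a, hι0, Limits.zero_comp]
    · rw [Limits.IsZero.iff_id_eq_zero]
      show 𝟙 (Y₂ a) = 0
      have hι0 : ι₂ a = 0 := by
        rw [← kι₂ a, he0, map_zero]
        exact Limits.comp_zero
      rw [← hιπ₂ a, hι0, Limits.zero_comp]
    · rw [Limits.IsZero.iff_id_eq_zero]
      show 𝟙 (Y₃ a) = 0
      have hι0 : ι₃ a = 0 := by
        rw [← kι₃ a, he0, map_zero]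
        exact Limits.comp_zero
      rw [← hιπ₃ a, hι0, Limits.zero_comp]
  · -- equivariance : ι
    intro a
    apply Triangle.hom_ext
    · show ι₁ a ≫ φ.hom₁ = (ι₁ a ≫ φ.hom₁ ≫ π₁ a) ≫ ι₁ a
      simp only [Category.assoc]
      slice_rhs 3 4 => rw [hπι₁ a]
      slice_rhs 2 3 => rw [keyComm T.obj₁ φ.hom₁ (e a)]
      slice_rhs 1 2 => rw [kι₁ a]
    · show ι₂ a ≫ φ.hom₂ = (ι₂ a ≫ φ.hom₂ ≫ π₂ a) ≫ ι₂ a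
      simp only [Category.assoc]
      slice_rhs 3 4 => rw [hπι₂ a]
      slice_rhs 2 3 => rw [keyComm T.obj₂ φ.hom₂ (e a)]
      slice_rhs 1 2 => rw [kι₂ a]
    · show ι₃ a ≫ φ.hom₃ = (ι₃ a ≫ φ.hom₃ ≫ π₃ a) ≫ ι₃ a
      simp only [Category.assoc]
      slice_rhs 3 4 => rw [hπι₃ a]
      slice_rhs 2 3 => rw [keyComm T.obj₃ φ.hom₃ (e a)]
      slice_rhs 1 2 => rw [kι₃ a]
  · -- equivariance : p
    intro a
    apply Triangle.hom_ext
    · show φ.hom₁ ≫ π₁ a = π₁ a ≫ ι₁ a ≫ φ.hom₁ ≫ π₁ a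
      slice_rhs 1 2 => rw [hπι₁ a]
      slice_rhs 1 2 => rw [← keyComm T.obj₁ φ.hom₁ (e a)]
      slice_rhs 2 3 => rw [kπ₁ a]
    · show φ.hom₂ ≫ π₂ a = π₂ a ≫ ι₂ a ≫ φ.hom₂ ≫ π₂ a
      slice_rhs 1 2 => rw [hπι₂ a]
      slice_rhs 1 2 => rw [← keyComm T.obj₂ φ.hom₂ (e a)]
      slice_rhs 2 3 => rw [kπ₂ a]
    · show φ.hom₃ ≫ π₃ a = π₃ a ≫ ι₃ a ≫ φ.hom₃ ≫ π₃ a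
      slice_rhs 1 2 => rw [hπι₃ a]
      slice_rhs 1 2 => rw [← keyComm T.obj₃ φ.hom₃ (e a)]
      slice_rhs 2 3 => rw [kπ₃ a]
  · -- nilpotency of `φ - a • id` on each piece
    intro a
    refine ⟨K, hKpos, ?_, ?_, ?_⟩
    · show (Polynomial.aeval (A := End (Y₁ a)) (ι₁ a ≫ φ.hom₁ ≫ π₁ a)
        ((Polynomial.X - Polynomial.C a) ^ K)) = 0
      refine Eq.trans (Stmt4Aux.aeval_conj (ι₁ a) (π₁ a) φ.hom₁ _ _ rfl (hιπ₁ a) (hπι₁ a)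
        (keyComm T.obj₁ φ.hom₁ (e a)) (kι₁ a) ((Polynomial.X - Polynomial.C a) ^ K)) ?_
      rw [← kι₁ a]
      simp only [Category.assoc]
      slice_lhs 2 3 => rw [keyNil T.obj₁ φ.hom₁ hQ1 a]
      simp only [Limits.zero_comp, Limits.comp_zero]
    · show (Polynomial.aeval (A := End (Y₂ a)) (ι₂ a ≫ φ.hom₂ ≫ π₂ a)
        ((Polynomial.X - Polynomial.C a) ^ K)) = 0
      refine Eq.trans (Stmt4Aux.aeval_conj (ι₂ a) (π₂ a) φ.hom₂ _ _ rfl (hιπ₂ a) (hπι₂ a)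
        (keyComm T.obj₂ φ.hom₂ (e a)) (kι₂ a) ((Polynomial.X - Polynomial.C a) ^ K)) ?_
      rw [← kι₂ a]
      simp only [Category.assoc]
      slice_lhs 2 3 => rw [keyNil T.obj₂ φ.hom₂ hQ2 a]
      simp only [Limits.zero_comp, Limits.comp_zero]
    · show (Polynomial.aeval (A := End (Y₃ a)) (ι₃ a ≫ φ.hom₃ ≫ π₃ a)
        ((Polynomial.X - Polynomial.C a) ^ K)) = 0
      refine Eq.trans (Stmt4Aux.aeval_conj (ι₃ a) (π₃ a) φ.hom₃ _ _ rfl (hιπ₃ a) (hπι₃ a)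
        (keyComm T.obj₃ φ.hom₃ (e a)) (kι₃ a) ((Polynomial.X - Polynomial.C a) ^ K)) ?_
      rw [← kι₃ a]
      simp only [Category.assoc]
      slice_lhs 2 3 => rw [keyNil T.obj₃ φ.hom₃ hQ3 a]
      simp only [Limits.zero_comp, Limits.comp_zero]
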